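/- Assume every component type I k has at least two elements, and the output type O is finite with at least two elements. Then φ_dm is semantically black-box monitorable — that is, every finite set U ⊆ In × O has a finite set V with U ⊆ V ⊆ In × O such that V permanently satisfies φ_dm or V permanently violates φ_dm (in the black-box setting) — if and only if the input type In is finite. -/

import Mathlib

/-- A set `T` of input/output traces satisfies the distributed-data-minimality
hyperproperty `φ_dm`. -/
def PhiDM {n : ℕ} {I : Fin n → Type*} {O : Type*}
    (T : Set ((∀ k, I k) × O)) : Prop :=
  ∀ i : Fin n, ∀ u ∈ T, ∀ u' ∈ T, u.1 i ≠ u'.1 i →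
    ∃ v ∈ T, ∃ v' ∈ T, v.1 i = u.1 i ∧ v'.1 i = u'.1 i ∧
      (∀ k, k ≠ i → v.1 k = v'.1 k) ∧ v.2 ≠ v'.2

/-- The function `f` is distributed data-minimal (DDM). -/
def DDM {n : ℕ} {I : Fin n → Type*} {O : Type*}
    (f : (∀ k, I k) → O) : Prop :=
  ∀ i : Fin n, ∀ x y : I i, x ≠ y →
    ∃ z : ∀ k, I k, f (Function.update z i x) ≠ f (Function.update z i y)

/-- The graph of `f`: the set of its valid input/output pairs. -/
def graphOf {n : ℕ} {I : Fin n → Type*} {O : Type*}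
    (f : (∀ k, I k) → O) : Set ((∀ k, I k) × O) :=
  {p | p.2 = f p.1}

/-- The full set of traces always satisfies `φ_dm` when `O` has two elements. -/
lemma phiDM_univ {n : ℕ} {I : Fin n → Type*} {O : Type*}
    (hO : ∃ o o' : O, o ≠ o') :
    PhiDM (Set.univ : Set ((∀ k, I k) × O)) := by
  obtain ⟨o, o', hoo⟩ := hO
  intro i u _ u' _ _
  refine ⟨(u.1, o), trivial, (Function.update u.1 i (u'.1 i), o'), trivial, rfl, ?_, ?_, hoo⟩
  · simp
  · intro k hk
    simp [Function.update_of_ne hk]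

theorem ddm_blackbox_monitorable_iff_finite_input
    {n : ℕ} {I : Fin n → Type*} {O : Type*} [Finite O]
    (hn : 1 ≤ n) (hI : ∀ k : Fin n, ∃ x y : I k, x ≠ y)
    (hO : ∃ o o' : O, o ≠ o') :
    (∀ U : Set ((∀ k, I k) × O), U.Finite →
      ∃ V : Set ((∀ k, I k) × O), U ⊆ V ∧ V.Finite ∧
        ((∀ B : Set ((∀ k, I k) × O), V ⊆ B → PhiDM B) ∨
         (∀ B : Set ((∀ k, I k) × O), V ⊆ B → ¬ PhiDM B)))
    ↔ Finite (∀ k, I k) := by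
  constructor
  · intro h
    by_contra hfin
    -- some component type is infinite
    have hinf : ∃ i : Fin n, Infinite (I i) := by
      by_contra hc
      push_neg at hc
      have : ∀ k, Finite (I k) := fun k => hc k
      exact hfin (Pi.finite)
    obtain ⟨i, hIi⟩ := hinf
    obtain ⟨V, -, hVfin, hcase⟩ := h ∅ Set.finite_empty
    rcases hcase with hsat | hviol
    · -- build a superset violating φ_dm
      have hz : ∀ k, Nonempty (I k) := fun k => (hI k).elim fun x h => ⟨x⟩
      let z : ∀ k, I k := fun k => Classical.choice (hz k)
      set S : Set (I i) := (fun p : (∀ k, I k) × O => p.1 i) '' V with hS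
      have hSfin : S.Finite := hVfin.image _
      have hScompl : Sᶜ.Infinite := hSfin.infinite_compl
      obtain ⟨x, hx, y, hy, hxy⟩ := hScompl.nontrivial
      obtain ⟨o, -, -⟩ := hO
      set u : (∀ k, I k) × O := (Function.update z i x, o) with hu_def
      set u' : (∀ k, I k) × O := (Function.update z i y, o) with hu'_def
      set B : Set ((∀ k, I k) × O) := insert u (insert u' V) with hB
      have hVB : V ⊆ B := fun p hp => Or.inr (Or.inr hp)
      have hphi := hsat B hVB
      have huB : u ∈ B := Or.inl rfl
      have hu'B : u' ∈ B := Or.inr (Or.inl rfl)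
      have hune : u.1 i ≠ u'.1 i := by
        simpa [hu_def, hu'_def] using hxy
      obtain ⟨v, hv, v', hv', h1, h2, h3, h4⟩ := hphi i u huB u' hu'B hune
      have hvi : v.1 i = x := by simpa [hu_def] using h1
      have hv'i : v'.1 i = y := by simpa [hu'_def] using h2
      have hvu : v = u := by
        rcases hv with rfl | rfl | hvV
        · rfl
        · exact absurd (by simpa [hu'_def] using hvi) hxy.symm
        · exact absurd ⟨v, hvV, hvi⟩ hx
      have hv'u' : v' = u' := by
        rcases hv' with rfl | rfl | hv'V
        · exact absurd (by simpa [hu_def] using hv'i) hxy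
        · rfl
        · exact absurd ⟨v', hv'V, hv'i⟩ hy
      apply h4
      rw [hvu, hv'u']
    · exact hviol Set.univ (Set.subset_univ V) (phiDM_univ hO)
  · intro hfin U hU
    haveI : Finite ((∀ k, I k) × O) := inferInstance
    refine ⟨Set.univ, Set.subset_univ U, Set.finite_univ, ?_⟩
    by_cases hphi : PhiDM (Set.univ : Set ((∀ k, I k) × O))
    · left
      intro B hB
      rwa [Set.univ_subset_iff.mp hB]
    · right
      intro B hB
      rwa [Set.univ_subset_iff.mp hB]
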